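/- In Wegner's category Mon (objects: injective bounded operators f: X' → X between Banach spaces; morphisms: commuting squares (α', α) up to the homotopy relation where (α', α) = 0 iff there exists a bounded operator h: X → Y' with g∘h = α), every morphism has a cokernel: the cokernel of (α', α): f → g is the object ι: g[Y'] + α[X] → Y, where g[Y'] + α[X] carries the norm ‖z‖ = inf{‖y'‖_{Y'} + ‖x‖_X : z = g(y') + α(x)}, together with the morphism (g, id_Y). -/

import Mathlib

noncomputable section

variable {Y' X Y : Type}
  [NormedAddCommGroup Y'] [NormedSpace ℝ Y'] [CompleteSpace Y']
  [NormedAddCommGroup X] [NormedSpace ℝ X] [CompleteSpace X]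
  [NormedAddCommGroup Y] [NormedSpace ℝ Y] [CompleteSpace Y]

/-- The operator `(y', x) ↦ g y' + u x` on `Y' ×₁ X` (product with the sum norm). -/
def coprodL1 (g : Y' →L[ℝ] Y) (u : X →L[ℝ] Y) : WithLp 1 (Y' × X) →L[ℝ] Y :=
  (g.coprod u).comp (WithLp.prodContinuousLinearEquiv 1 ℝ Y' X).toContinuousLinearMap

/-- Its kernel. -/
def cokKer (g : Y' →L[ℝ] Y) (u : X →L[ℝ] Y) : Submodule ℝ (WithLp 1 (Y' × X)) :=
  LinearMap.ker (coprodL1 g u).toLinearMap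

instance cokKerClosed (g : Y' →L[ℝ] Y) (u : X →L[ℝ] Y) :
    IsClosed ((cokKer g u : Set (WithLp 1 (Y' × X)))) :=
  ContinuousLinearMap.isClosed_ker (coprodL1 g u)

/-- The Banach space `g[Y'] + u[X]` with the norm
`‖z‖ = inf { ‖y'‖ + ‖x‖ : z = g y' + u x }`, realized as the quotient of `Y' ×₁ X` by the kernel
of `(y', x) ↦ g y' + u x`. -/
abbrev SumSp (g : Y' →L[ℝ] Y) (u : X →L[ℝ] Y) : Type :=
  WithLp 1 (Y' × X) ⧸ cokKer g u

/-- The canonical quotient map onto `SumSp g u`. -/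
def sumMk (g : Y' →L[ℝ] Y) (u : X →L[ℝ] Y) : WithLp 1 (Y' × X) →L[ℝ] SumSp g u :=
  LinearMap.mkContinuous (cokKer g u).mkQ 1
    (fun w => by rw [one_mul]; exact Submodule.Quotient.norm_mk_le _ w)

/-- The induced injective operator `SumSp g u → Y`, i.e. the inclusion of `g[Y'] + u[X]`
(with the infimum norm) into `Y`. -/
def sumIncl (g : Y' →L[ℝ] Y) (u : X →L[ℝ] Y) : SumSp g u →L[ℝ] Y :=
  LinearMap.mkContinuous ((cokKer g u).liftQ (coprodL1 g u).toLinearMap le_rfl)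
    ‖coprodL1 g u‖
    (fun q => by
      obtain ⟨w, rfl⟩ := Submodule.Quotient.mk_surjective _ q
      change ‖(coprodL1 g u).toLinearMap w‖ ≤ ‖coprodL1 g u‖ * ‖Submodule.Quotient.mk (p := cokKer g u) w‖
      refine le_of_forall_pos_le_add fun ε hε => ?_
      set f := coprodL1 g u with hf
      have hd : (0:ℝ) < ε / (‖f‖ + 1) := by positivity
      obtain ⟨m, hm, hlt⟩ :=
        Submodule.Quotient.norm_mk_lt (Submodule.Quotient.mk (p := cokKer g u) w) hd
      have hmem : m - w ∈ cokKer g u := (Submodule.Quotient.eq _).1 hm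
      have h0 : f m - f w = 0 := by
        have h0' : f (m - w) = 0 := hmem
        rw [map_sub] at h0'; exact h0'
      have hfw : f w = f m := (sub_eq_zero.1 h0).symm
      calc ‖f.toLinearMap w‖ = ‖f m‖ := by
            show ‖f w‖ = ‖f m‖
            rw [hfw]
        _ ≤ ‖f‖ * ‖m‖ := f.le_opNorm m
        _ ≤ ‖f‖ * (‖Submodule.Quotient.mk (p := cokKer g u) w‖ + ε / (‖f‖ + 1)) :=
            mul_le_mul_of_nonneg_left (le_of_lt hlt) (norm_nonneg _)
        _ ≤ ‖f‖ * ‖Submodule.Quotient.mk (p := cokKer g u) w‖ + ε := by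
            rw [mul_add]
            refine add_le_add le_rfl ?_
            have h1 : ‖f‖ ≤ ‖f‖ + 1 := by linarith
            calc ‖f‖ * (ε / (‖f‖ + 1)) ≤ (‖f‖ + 1) * (ε / (‖f‖ + 1)) :=
                  mul_le_mul_of_nonneg_right h1 (by positivity)
              _ = ε := by field_simp)

/-- The canonical map `Y' → SumSp g u`, `y' ↦ class of (y', 0)`. -/
def sumInl (g : Y' →L[ℝ] Y) (u : X →L[ℝ] Y) : Y' →L[ℝ] SumSp g u :=
  (sumMk g u).comp
    ((WithLp.prodContinuousLinearEquiv 1 ℝ Y' X).symm.toContinuousLinearMap.comp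
      (ContinuousLinearMap.inl ℝ Y' X))


section Aux

variable {Y' X Y : Type}
  [NormedAddCommGroup Y'] [NormedSpace ℝ Y'] [CompleteSpace Y']
  [NormedAddCommGroup X] [NormedSpace ℝ X] [CompleteSpace X]
  [NormedAddCommGroup Y] [NormedSpace ℝ Y] [CompleteSpace Y]

lemma l1norm (w : WithLp 1 (Y' × X)) : ‖w‖ = ‖w.fst‖ + ‖w.snd‖ := by
  rw [WithLp.prod_norm_eq_add (by norm_num)]
  norm_num

lemma coprodL1_apply (g : Y' →L[ℝ] Y) (u : X →L[ℝ] Y) (w : WithLp 1 (Y' × X)) :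
    coprodL1 g u w = g w.fst + u w.snd := rfl

lemma sumIncl_mk (g : Y' →L[ℝ] Y) (u : X →L[ℝ] Y) (w : WithLp 1 (Y' × X)) :
    sumIncl g u (Submodule.Quotient.mk w) = coprodL1 g u w := rfl

lemma sumInl_apply (g : Y' →L[ℝ] Y) (u : X →L[ℝ] Y) (y' : Y') :
    sumInl g u y' = Submodule.Quotient.mk ((WithLp.equiv 1 (Y' × X)).symm (y', 0)) := rfl

/-- general continuous lift out of the quotient -/
lemma exists_lift {W : Type} [NormedAddCommGroup W] [NormedSpace ℝ W]
    (g : Y' →L[ℝ] Y) (u : X →L[ℝ] Y) (ψ : WithLp 1 (Y' × X) →L[ℝ] W)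
    (hψ : ∀ w ∈ cokKer g u, ψ w = 0) :
    ∃ μ' : SumSp g u →L[ℝ] W, ∀ w, μ' (Submodule.Quotient.mk w) = ψ w := by
  refine ⟨LinearMap.mkContinuous
    ((cokKer g u).liftQ ψ.toLinearMap (by intro x hx; exact LinearMap.mem_ker.2 (hψ x hx))) ‖ψ‖ (fun q => ?_),
    fun w => rfl⟩
  obtain ⟨w, rfl⟩ := Submodule.Quotient.mk_surjective _ q
  rw [Submodule.liftQ_apply]
  refine le_of_forall_pos_le_add fun ε hε => ?_
  have hd : (0:ℝ) < ε / (‖ψ‖ + 1) := by positivity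
  obtain ⟨m, hm, hlt⟩ :=
    Submodule.Quotient.norm_mk_lt (Submodule.Quotient.mk (p := cokKer g u) w) hd
  have hmem : m - w ∈ cokKer g u := (Submodule.Quotient.eq _).1 hm
  have h0 : ψ m - ψ w = 0 := by
    have := hψ _ hmem; rwa [map_sub] at this
  have hfw : ψ w = ψ m := (sub_eq_zero.1 h0).symm
  calc ‖ψ.toLinearMap w‖ = ‖ψ m‖ := by show ‖ψ w‖ = ‖ψ m‖; rw [hfw]
    _ ≤ ‖ψ‖ * ‖m‖ := ψ.le_opNorm m
    _ ≤ ‖ψ‖ * (‖Submodule.Quotient.mk (p := cokKer g u) w‖ + ε / (‖ψ‖ + 1)) :=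
        mul_le_mul_of_nonneg_left hlt.le (norm_nonneg _)
    _ ≤ ‖ψ‖ * ‖Submodule.Quotient.mk (p := cokKer g u) w‖ + ε := by
        rw [mul_add]
        refine add_le_add le_rfl ?_
        calc ‖ψ‖ * (ε / (‖ψ‖ + 1)) ≤ (‖ψ‖ + 1) * (ε / (‖ψ‖ + 1)) :=
              mul_le_mul_of_nonneg_right (by linarith) (by positivity)
          _ = ε := by field_simp

lemma sumIncl_injective (g : Y' →L[ℝ] Y) (u : X →L[ℝ] Y) :
    Function.Injective (sumIncl g u) := by
  have hker : LinearMap.ker ((cokKer g u).liftQ (coprodL1 g u).toLinearMap le_rfl) = ⊥ :=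
    Submodule.ker_liftQ_eq_bot _ _ _ le_rfl
  intro a b hab
  have hab' : (sumIncl g u).toLinearMap a = (sumIncl g u).toLinearMap b := hab
  exact LinearMap.ker_eq_bot.1 hker hab'

end Aux

/-- Wegner's category `Mon` has cokernels: given objects `f : X' ↪ X`, `g : Y' ↪ Y` (injective
bounded operators between Banach spaces) and a morphism `(α', α) : f ⟶ g`, its cokernel is the
object `ι : g[Y'] + α[X] ↪ Y`, where `g[Y'] + α[X]` carries the norm
`‖z‖ = inf {‖y'‖ + ‖x‖ : z = g y' + α x}` (realized as `SumSp g α` with inclusion `sumIncl g α`),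
together with the morphism `(sumInl g α, id_Y) : g ⟶ ι`; morphisms of `Mon` are commuting
squares up to the homotopy relation `(σ', σ) = 0 ↔ ∃ h, (target inclusion) ∘ h = σ`. -/


theorem stmt18 {X' : Type} [NormedAddCommGroup X'] [NormedSpace ℝ X'] [CompleteSpace X']
    (f : X' →L[ℝ] X) (hf : Function.Injective f)
    (g : Y' →L[ℝ] Y) (hg : Function.Injective g)
    (α' : X' →L[ℝ] Y') (α : X →L[ℝ] Y) (hsq : g.comp α' = α.comp f) :
    -- `ι = sumIncl g α` is an injective operator with range `g[Y'] + α[X]`, and the norm on its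
    -- domain is `‖z‖ = inf {‖y'‖ + ‖x‖ : z = g y' + α x}`:
    Function.Injective (sumIncl g α) ∧
    Set.range (sumIncl g α) = {z : Y | ∃ y' x, z = g y' + α x} ∧
    (∀ q : SumSp g α,
      ‖q‖ = sInf {r : ℝ | ∃ y' x, sumIncl g α q = g y' + α x ∧ r = ‖y'‖ + ‖x‖}) ∧
    -- `(sumInl g α, id_Y)` is a morphism `g ⟶ ι`:
    (sumIncl g α).comp (sumInl g α) = g ∧
    -- composing it with `(α', α)` gives zero in `Mon` (the composite is homotopic to `0`):
    (∃ h : X →L[ℝ] SumSp g α, (sumIncl g α).comp h = α ∧ h.comp f = (sumInl g α).comp α') ∧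
    -- universal property: any morphism `(β', β) : g ⟶ k` with `(β', β)∘(α', α) = 0` in `Mon`
    -- factors through `(sumInl g α, id_Y)`, uniquely up to the homotopy relation:
    ∀ (Z' Z : Type) (_ : NormedAddCommGroup Z') (_ : NormedSpace ℝ Z') (_ : CompleteSpace Z')
      (_ : NormedAddCommGroup Z) (_ : NormedSpace ℝ Z) (_ : CompleteSpace Z)
      (k : Z' →L[ℝ] Z), Function.Injective k →
      ∀ (β' : Y' →L[ℝ] Z') (β : Y →L[ℝ] Z), k.comp β' = β.comp g →
        (∃ h₀ : X →L[ℝ] Z', k.comp h₀ = β.comp α ∧ h₀.comp f = β'.comp α') →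
        (∃ (μ' : SumSp g α →L[ℝ] Z') (μ : Y →L[ℝ] Z),
            k.comp μ' = μ.comp (sumIncl g α) ∧
            (∃ h : Y →L[ℝ] Z', k.comp h = μ - β ∧ h.comp g = μ'.comp (sumInl g α) - β')) ∧
        ∀ (μ'₁ : SumSp g α →L[ℝ] Z') (μ₁ : Y →L[ℝ] Z)
          (μ'₂ : SumSp g α →L[ℝ] Z') (μ₂ : Y →L[ℝ] Z),
          k.comp μ'₁ = μ₁.comp (sumIncl g α) → k.comp μ'₂ = μ₂.comp (sumIncl g α) →
          (∃ h : Y →L[ℝ] Z', k.comp h = μ₁ - β ∧ h.comp g = μ'₁.comp (sumInl g α) - β') →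
          (∃ h : Y →L[ℝ] Z', k.comp h = μ₂ - β ∧ h.comp g = μ'₂.comp (sumInl g α) - β') →
          ∃ h : Y →L[ℝ] Z', k.comp h = μ₁ - μ₂ ∧ h.comp (sumIncl g α) = μ'₁ - μ'₂ := by
  have hmk : ∀ w : WithLp 1 (Y' × X),
      sumIncl g α (Submodule.Quotient.mk w) = g w.fst + α w.snd := fun w => rfl
  refine ⟨sumIncl_injective g α, ?_, ?_, ?_, ?_, ?_⟩
  · ext z
    constructor
    · rintro ⟨q, rfl⟩
      obtain ⟨w, rfl⟩ := Submodule.Quotient.mk_surjective _ q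
      exact ⟨w.fst, w.snd, (hmk w).symm⟩
    · rintro ⟨y', x, rfl⟩
      exact ⟨Submodule.Quotient.mk ((WithLp.equiv 1 (Y' × X)).symm (y', x)), rfl⟩
  · intro q
    have hnorm : ‖q‖ = sInf (norm '' {m | Submodule.Quotient.mk m = q}) := by
      obtain ⟨w0, hw0⟩ := Submodule.Quotient.mk_surjective _ q
      have hne : (norm '' {m : WithLp 1 (Y' × X) | Submodule.Quotient.mk m = q}).Nonempty :=
        ⟨‖w0‖, w0, hw0, rfl⟩
      have hbdd : BddBelow (norm '' {m : WithLp 1 (Y' × X) | Submodule.Quotient.mk m = q}) :=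
        ⟨0, by rintro _ ⟨m, _, rfl⟩; exact norm_nonneg _⟩
      apply le_antisymm
      · apply le_csInf hne
        rintro _ ⟨m, hm, rfl⟩
        rw [← hm]
        exact Submodule.Quotient.norm_mk_le _ m
      · apply le_of_forall_pos_le_add
        intro ε hε
        obtain ⟨m, hm, hlt⟩ := Submodule.Quotient.norm_mk_lt q hε
        exact (csInf_le hbdd ⟨m, hm, rfl⟩).trans hlt.le
    rw [hnorm]
    congr 1
    ext r
    constructor
    · rintro ⟨m, hm, rfl⟩
      exact ⟨m.fst, m.snd, by rw [← hm]; exact hmk m, l1norm m⟩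
    · rintro ⟨y', x, hz, rfl⟩
      refine ⟨(WithLp.equiv 1 (Y' × X)).symm (y', x), ?_, (l1norm _)⟩
      apply sumIncl_injective g α
      rw [hmk]; exact hz.symm
  · ext y'
    simp only [ContinuousLinearMap.comp_apply]
    rw [sumInl_apply, hmk]
    simp
  · set hA : X →L[ℝ] SumSp g α := (sumMk g α).comp
      ((WithLp.prodContinuousLinearEquiv 1 ℝ Y' X).symm.toContinuousLinearMap.comp
        (ContinuousLinearMap.inr ℝ Y' X)) with hAdef
    have hApt : ∀ x : X, hA x = Submodule.Quotient.mk
        ((WithLp.equiv 1 (Y' × X)).symm (0, x)) := fun x => rfl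
    refine ⟨hA, ?_, ?_⟩
    · ext x
      simp only [ContinuousLinearMap.comp_apply]
      rw [hApt, hmk]
      simp
    · ext x'
      simp only [ContinuousLinearMap.comp_apply]
      rw [hApt, sumInl_apply]
      rw [Submodule.Quotient.eq]
      show coprodL1 g α _ = 0
      have h1 : coprodL1 g α ((WithLp.equiv 1 (Y' × X)).symm (0, f x')) = α (f x') := by
        rw [coprodL1_apply]; simp
      have h2 : coprodL1 g α ((WithLp.equiv 1 (Y' × X)).symm (α' x', 0)) = g (α' x') := by
        rw [coprodL1_apply]; simp
      rw [map_sub, h1, h2]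
      have := congrFun (congrArg (fun (t : X' →L[ℝ] Y) => (t : X' → Y)) hsq) x'
      simp only [ContinuousLinearMap.comp_apply] at this
      rw [← this, sub_self]
  · intro Z' Z _ _ _ _ _ _ k hk β' β hβsq hfac
    obtain ⟨h₀, hh₀1, hh₀2⟩ := hfac
    constructor
    · -- existence
      set ψ : WithLp 1 (Y' × X) →L[ℝ] Z' :=
        ((β'.coprod h₀).comp
          (WithLp.prodContinuousLinearEquiv 1 ℝ Y' X).toContinuousLinearMap) with hψdef
      have hψap : ∀ w : WithLp 1 (Y' × X), ψ w = β' w.fst + h₀ w.snd := fun w => rfl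
      have hkψ : ∀ w : WithLp 1 (Y' × X), k (ψ w) = β (coprodL1 g α w) := by
        intro w
        rw [hψap, coprodL1_apply, map_add, map_add]
        have e1 : k (β' w.fst) = β (g w.fst) :=
          congrFun (congrArg (fun (t : Y' →L[ℝ] Z) => (t : Y' → Z)) hβsq) w.fst
        have e2 : k (h₀ w.snd) = β (α w.snd) :=
          congrFun (congrArg (fun (t : X →L[ℝ] Z) => (t : X → Z)) hh₀1) w.snd
        rw [e1, e2]
      obtain ⟨μ', hμ'⟩ := exists_lift g α ψ (fun w hw => by
        apply hk
        rw [hkψ w, map_zero]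
        have hw0 : coprodL1 g α w = 0 := hw
        rw [hw0, map_zero])
      refine ⟨μ', β, ?_, 0, by simp, ?_⟩
      · ext q
        obtain ⟨w, rfl⟩ := Submodule.Quotient.mk_surjective _ q
        simp only [ContinuousLinearMap.comp_apply]
        rw [show (Submodule.Quotient.mk w : SumSp g α) =
          Submodule.Quotient.mk (p := cokKer g α) w from rfl, hμ', hkψ, sumIncl_mk]
      · ext y'
        simp only [ContinuousLinearMap.zero_comp, ContinuousLinearMap.zero_apply,
          ContinuousLinearMap.sub_apply, ContinuousLinearMap.comp_apply]
        rw [sumInl_apply, hμ', hψap]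
        simp
    · -- uniqueness
      rintro μ'₁ μ₁ μ'₂ μ₂ hc1 hc2 ⟨h₁, hk1, hg1⟩ ⟨h₂, hk2, hg2⟩
      refine ⟨h₁ - h₂, ?_, ?_⟩
      · rw [ContinuousLinearMap.comp_sub, hk1, hk2]; abel
      · ext q
        apply hk
        have e1 : k (h₁ (sumIncl g α q)) = μ₁ (sumIncl g α q) - β (sumIncl g α q) :=
          congrFun (congrArg (fun (t : Y →L[ℝ] Z) => (t : Y → Z)) hk1) _
        have e2 : k (h₂ (sumIncl g α q)) = μ₂ (sumIncl g α q) - β (sumIncl g α q) :=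
          congrFun (congrArg (fun (t : Y →L[ℝ] Z) => (t : Y → Z)) hk2) _
        have e3 : k (μ'₁ q) = μ₁ (sumIncl g α q) :=
          congrFun (congrArg (fun (t : SumSp g α →L[ℝ] Z) => (t : SumSp g α → Z)) hc1) q
        have e4 : k (μ'₂ q) = μ₂ (sumIncl g α q) :=
          congrFun (congrArg (fun (t : SumSp g α →L[ℝ] Z) => (t : SumSp g α → Z)) hc2) q
        simp only [ContinuousLinearMap.comp_apply, ContinuousLinearMap.sub_apply, map_sub]
        rw [e1, e2, e3, e4]
        abel



end
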